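/- Let β_init be any minimizer over ℝ^p of β ↦ ‖Xβ − f⁰‖_n² + λ_init‖β‖_1 (λ_init > 0). Let S₀ ⊆ {1,…,p} be nonempty with s₀ := |S₀|, and let b⁰ ∈ ℝ^p be supported on S₀ with Xb⁰ the orthogonal projection of f⁰ onto span{ψ_j : j ∈ S₀}. (i) If φ > 0 satisfies ‖Xγ‖_n ≥ φ‖γ_{S₀}‖_2 for every γ with ‖γ_{S₀^c}‖_1 ≤ 2√s₀·‖γ_{S₀}‖_2, then ‖β_init − b⁰‖_1 ≤ 3‖Xb⁰ − f⁰‖_n²/λ_init + 3λ_init·s₀/φ². (ii) If φ' > 0 is such that for every index set 𝒩 with S₀ ⊆ 𝒩 and |𝒩| ≤ 2s₀, and every γ with ‖γ_{𝒩^c}‖_1 ≤ 2√|𝒩|·‖γ_𝒩‖_2 and max_{j∉𝒩}|γ_j| ≤ min_{j∈𝒩∖S₀}|γ_j|, one has ‖Xγ‖_n ≥ φ'‖γ_𝒩‖_2, then ‖β_init − b⁰‖_2 ≤ 6‖Xb⁰ − f⁰‖_n²/(λ_init·√s₀) + 12λ_init·√s₀/φ'². -/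

import Mathlib

open Finset

lemma exists_top_subset {α : Type*} [DecidableEq α] (s : Finset α) (f : α → ℝ) :
    ∀ m : ℕ, m ≤ s.card → ∃ M, M ⊆ s ∧ M.card = m ∧
      ∀ j ∈ s, j ∉ M → ∀ k ∈ M, f j ≤ f k := by
  intro m
  induction m with
  | zero => exact fun _ => ⟨∅, Finset.empty_subset _, rfl, by simp⟩
  | succ m ih =>
      intro hm
      obtain ⟨M, hMs, hMc, hMtop⟩ := ih (Nat.le_of_succ_le hm)
      have hne : (s \ M).Nonempty := by
        rw [← Finset.card_pos, Finset.card_sdiff_of_subset hMs, hMc]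
        omega
      obtain ⟨k, hk, hkmax⟩ := Finset.exists_max_image (s \ M) f hne
      have hks := Finset.mem_sdiff.mp hk
      refine ⟨insert k M, Finset.insert_subset hks.1 hMs, ?_, ?_⟩
      · rw [Finset.card_insert_of_notMem hks.2, hMc]
      · intro j hj hjM k' hk'
        rcases Finset.mem_insert.mp hk' with rfl | hk'M
        · exact hkmax j (Finset.mem_sdiff.mpr ⟨hj, fun h => hjM (Finset.mem_insert_of_mem h)⟩)
        · exact hMtop j hj (fun h => hjM (Finset.mem_insert_of_mem h)) k' hk'M

lemma quad_root_bound {t K ρ : ℝ} (ht : 0 ≤ t) (hK : 0 ≤ K) (hρ : 0 ≤ ρ)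
    (h : t ^ 2 ≤ K * t + ρ ^ 2) : t ≤ K + ρ := by
  rcases le_or_gt t ρ with h' | h'
  · linarith
  · nlinarith

lemma sqrt_add_le' {x y : ℝ} (hx : 0 ≤ x) (hy : 0 ≤ y) :
    Real.sqrt (x + y) ≤ Real.sqrt x + Real.sqrt y := by
  have hx' := Real.sq_sqrt hx
  have hy' := Real.sq_sqrt hy
  have h1 : x + y ≤ (Real.sqrt x + Real.sqrt y) ^ 2 := by
    nlinarith [Real.sqrt_nonneg x, Real.sqrt_nonneg y]
  calc Real.sqrt (x + y) ≤ Real.sqrt ((Real.sqrt x + Real.sqrt y) ^ 2) :=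
        Real.sqrt_le_sqrt h1
    _ = Real.sqrt x + Real.sqrt y := Real.sqrt_sq (by positivity)

lemma l1_le_sqrt_card_mul_l2 {α : Type*} (s : Finset α) (f : α → ℝ) :
    ∑ j ∈ s, |f j| ≤ Real.sqrt s.card * Real.sqrt (∑ j ∈ s, f j ^ 2) := by
  have h : (∑ j ∈ s, |f j|) ^ 2 ≤ (s.card : ℝ) * ∑ j ∈ s, f j ^ 2 := by
    have := sq_sum_le_card_mul_sum_sq (s := s) (f := fun j => |f j|)
    simpa [sq_abs] using this
  have h0 : 0 ≤ ∑ j ∈ s, |f j| := Finset.sum_nonneg fun _ _ => abs_nonneg _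
  calc ∑ j ∈ s, |f j| = Real.sqrt ((∑ j ∈ s, |f j|) ^ 2) := (Real.sqrt_sq h0).symm
    _ ≤ Real.sqrt ((s.card : ℝ) * ∑ j ∈ s, f j ^ 2) := Real.sqrt_le_sqrt h
    _ = Real.sqrt s.card * Real.sqrt (∑ j ∈ s, f j ^ 2) := Real.sqrt_mul (by positivity) _

set_option maxHeartbeats 2000000 in
/-- ℓ1- and ℓ2-estimation bounds of Corollary `init.corollary` for the
noiseless initial Lasso. -/
theorem initial_lasso_estimation
    (n p : ℕ) (hn : 0 < n)
    (X : Matrix (Fin n) (Fin p) ℝ) (f0 : Fin n → ℝ)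
    (lamInit : ℝ) (hlamInit : 0 < lamInit)
    (βinit : Fin p → ℝ)
    (hβinit : ∀ β : Fin p → ℝ,
      (∑ i, (X.mulVec βinit i - f0 i) ^ 2) / n + lamInit * ∑ j, |βinit j|
        ≤ (∑ i, (X.mulVec β i - f0 i) ^ 2) / n + lamInit * ∑ j, |β j|)
    (S0 : Finset (Fin p)) (hS0 : S0.Nonempty)
    (b0 : Fin p → ℝ)
    (hb0supp : ∀ j ∉ S0, b0 j = 0)
    (hb0proj : ∀ j ∈ S0, ∑ i, (X.mulVec b0 i - f0 i) * X i j = 0)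
    (φ : ℝ) (hφ : 0 < φ)
    (hRE : ∀ γ : Fin p → ℝ,
      (∑ j ∈ S0ᶜ, |γ j|) ≤ 2 * Real.sqrt (S0.card) * Real.sqrt (∑ j ∈ S0, (γ j) ^ 2) →
      φ * Real.sqrt (∑ j ∈ S0, (γ j) ^ 2) ≤ Real.sqrt ((∑ i, (X.mulVec γ i) ^ 2) / n))
    (φ' : ℝ) (hφ' : 0 < φ')
    (hRE' : ∀ N : Finset (Fin p), S0 ⊆ N → N.card ≤ 2 * S0.card →
      ∀ γ : Fin p → ℝ,
        (∑ j ∈ Nᶜ, |γ j|) ≤ 2 * Real.sqrt (N.card) * Real.sqrt (∑ j ∈ N, (γ j) ^ 2) →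
        (∀ j ∉ N, ∀ k ∈ N \ S0, |γ j| ≤ |γ k|) →
        φ' * Real.sqrt (∑ j ∈ N, (γ j) ^ 2) ≤ Real.sqrt ((∑ i, (X.mulVec γ i) ^ 2) / n)) :
    (∑ j, |βinit j - b0 j|)
        ≤ 3 * ((∑ i, (X.mulVec b0 i - f0 i) ^ 2) / n) / lamInit
          + 3 * lamInit * S0.card / φ ^ 2
      ∧ Real.sqrt (∑ j, (βinit j - b0 j) ^ 2)
        ≤ 6 * ((∑ i, (X.mulVec b0 i - f0 i) ^ 2) / n) / (lamInit * Real.sqrt (S0.card))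
          + 12 * lamInit * Real.sqrt (S0.card) / φ' ^ 2 := by
  have hn' : (0:ℝ) < n := by exact_mod_cast hn
  have hcard : (0:ℝ) < S0.card := by exact_mod_cast hS0.card_pos
  have hmv : ∀ (β : Fin p → ℝ) (i : Fin n), X.mulVec β i = ∑ j, X i j * β j :=
    fun β i => rfl
  -- w = v - r pointwise
  have hwdef : ∀ i, X.mulVec (fun j => βinit j - b0 j) i
      = (X.mulVec βinit i - f0 i) - (X.mulVec b0 i - f0 i) := by
    intro i
    simp only [hmv, mul_sub, Finset.sum_sub_distrib]
    ring
  set A := ∑ j ∈ S0, |βinit j - b0 j| with hA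
  set B := ∑ j ∈ S0ᶜ, |βinit j - b0 j| with hB
  set R := (∑ i, (X.mulVec b0 i - f0 i) ^ 2) / (n:ℝ) with hR
  set T := (∑ i, (X.mulVec (fun j => βinit j - b0 j) i) ^ 2) / (n:ℝ) with hT
  set u := Real.sqrt (∑ j ∈ S0, (βinit j - b0 j) ^ 2) with hu
  set σ := Real.sqrt ((S0.card : ℝ)) with hσ
  have hA0 : 0 ≤ A := by rw [hA]; exact Finset.sum_nonneg fun _ _ => abs_nonneg _
  have hB0 : 0 ≤ B := by rw [hB]; exact Finset.sum_nonneg fun _ _ => abs_nonneg _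
  have hR0 : 0 ≤ R := by rw [hR]; positivity
  have hT0 : 0 ≤ T := by rw [hT]; positivity
  have hu0 : 0 ≤ u := by rw [hu]; positivity
  have hσ0 : 0 < σ := by rw [hσ]; exact Real.sqrt_pos.mpr hcard
  have hσ2 : σ ^ 2 = (S0.card : ℝ) := by rw [hσ]; exact Real.sq_sqrt hcard.le
  set ρ := Real.sqrt R with hρ
  have hρ0 : 0 ≤ ρ := by rw [hρ]; positivity
  have hρ2 : ρ ^ 2 = R := by rw [hρ]; exact Real.sq_sqrt hR0
  -- Cauchy-Schwarz on S0
  have hACS : A ≤ σ * u := by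
    rw [hA, hσ, hu]; exact l1_le_sqrt_card_mul_l2 S0 _
  -- the family of inequalities from minimality
  have hstep : ∀ s : ℝ, 0 < s → s ≤ 1 →
      2 * ((∑ i, (X.mulVec βinit i - f0 i) * X.mulVec (fun j => βinit j - b0 j) i) / n)
        ≤ s * T + lamInit * (∑ j, |b0 j|) - lamInit * (∑ j, |βinit j|) := by
    intro s hs0 hs1
    have hβ := hβinit (fun j => βinit j - s * (βinit j - b0 j))
    have hlin : ∀ i, X.mulVec (fun j => βinit j - s * (βinit j - b0 j)) i - f0 i
        = (X.mulVec βinit i - f0 i) - s * X.mulVec (fun j => βinit j - b0 j) i := by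
      intro i
      simp only [hmv]
      rw [show ∑ j, X i j * (βinit j - s * (βinit j - b0 j))
          = ∑ j, X i j * βinit j - s * ∑ j, X i j * (βinit j - b0 j) by
        rw [Finset.mul_sum, ← Finset.sum_sub_distrib]
        exact Finset.sum_congr rfl fun j _ => by ring]
      ring
    have hsq : ∑ i, (X.mulVec (fun j => βinit j - s * (βinit j - b0 j)) i - f0 i) ^ 2
        = ∑ i, (X.mulVec βinit i - f0 i) ^ 2
          - 2 * s * ∑ i, (X.mulVec βinit i - f0 i) * X.mulVec (fun j => βinit j - b0 j) i
          + s ^ 2 * ∑ i, (X.mulVec (fun j => βinit j - b0 j) i) ^ 2 := by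
      rw [Finset.mul_sum, Finset.mul_sum, ← Finset.sum_sub_distrib, ← Finset.sum_add_distrib]
      exact Finset.sum_congr rfl fun i _ => by rw [hlin i]; ring
    have hl1 : ∑ j, |βinit j - s * (βinit j - b0 j)|
        ≤ (1 - s) * ∑ j, |βinit j| + s * ∑ j, |b0 j| := by
      rw [Finset.mul_sum, Finset.mul_sum, ← Finset.sum_add_distrib]
      refine Finset.sum_le_sum fun j _ => ?_
      rw [show βinit j - s * (βinit j - b0 j) = (1 - s) * βinit j + s * b0 j by ring]
      calc |(1 - s) * βinit j + s * b0 j| ≤ |(1 - s) * βinit j| + |s * b0 j| := abs_add_le _ _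
        _ = (1 - s) * |βinit j| + s * |b0 j| := by
            rw [abs_mul, abs_mul, abs_of_nonneg (by linarith : (0:ℝ) ≤ 1 - s),
              abs_of_nonneg hs0.le]
    rw [hsq] at hβ
    have hdiv : (∑ i, (X.mulVec βinit i - f0 i) ^ 2
          - 2 * s * ∑ i, (X.mulVec βinit i - f0 i) * X.mulVec (fun j => βinit j - b0 j) i
          + s ^ 2 * ∑ i, (X.mulVec (fun j => βinit j - b0 j) i) ^ 2) / (n:ℝ)
        = (∑ i, (X.mulVec βinit i - f0 i) ^ 2) / (n:ℝ)
          - 2 * s * ((∑ i, (X.mulVec βinit i - f0 i)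
              * X.mulVec (fun j => βinit j - b0 j) i) / (n:ℝ))
          + s ^ 2 * T := by
      rw [hT]; ring
    rw [hdiv] at hβ
    have hl1' := mul_le_mul_of_nonneg_left hl1 hlamInit.le
    have key_s : s * (2 * ((∑ i, (X.mulVec βinit i - f0 i)
          * X.mulVec (fun j => βinit j - b0 j) i) / n))
        ≤ s * (s * T + lamInit * (∑ j, |b0 j|) - lamInit * (∑ j, |βinit j|)) := by
      linarith [hβ, hl1']
    exact le_of_mul_le_mul_left key_s hs0
  -- limit s → 0
  have hlim : 2 * ((∑ i, (X.mulVec βinit i - f0 i)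
        * X.mulVec (fun j => βinit j - b0 j) i) / n)
      ≤ lamInit * (∑ j, |b0 j|) - lamInit * (∑ j, |βinit j|) := by
    by_contra hcon
    push_neg at hcon
    set C2 := 2 * ((∑ i, (X.mulVec βinit i - f0 i)
        * X.mulVec (fun j => βinit j - b0 j) i) / n) with hC2
    set D := lamInit * (∑ j, |b0 j|) - lamInit * (∑ j, |βinit j|) with hD
    have hεpos : 0 < C2 - D := by linarith
    set s := min 1 ((C2 - D) / (2 * (T + 1))) with hs
    have hspos : 0 < s := by
      rw [hs]
      exact lt_min one_pos (by positivity)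
    have hsle : s ≤ 1 := min_le_left _ _
    have h := hstep s hspos hsle
    have hsW : s * T ≤ (C2 - D) / 2 := by
      have h1 : s ≤ (C2 - D) / (2 * (T + 1)) := min_le_right _ _
      have h2 : s * T ≤ ((C2 - D) / (2 * (T + 1))) * (T + 1) := by
        apply mul_le_mul h1 (by linarith) hT0 (by positivity)
      have h3 : ((C2 - D) / (2 * (T + 1))) * (T + 1) = (C2 - D) / 2 := by
        field_simp
      linarith
    linarith
  -- rewrite the inner product
  have hC : (∑ i, (X.mulVec βinit i - f0 i) * X.mulVec (fun j => βinit j - b0 j) i)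
      = (∑ i, (X.mulVec (fun j => βinit j - b0 j) i) ^ 2)
        + ∑ i, (X.mulVec b0 i - f0 i) * X.mulVec (fun j => βinit j - b0 j) i := by
    rw [← Finset.sum_add_distrib]
    exact Finset.sum_congr rfl fun i _ => by rw [hwdef i]; ring
  have hVpos : (0:ℝ) ≤ ∑ i, (X.mulVec βinit i - f0 i) ^ 2 := by positivity
  have hVexp : ∑ i, (X.mulVec βinit i - f0 i) ^ 2
      = (∑ i, (X.mulVec (fun j => βinit j - b0 j) i) ^ 2)
        + 2 * (∑ i, (X.mulVec b0 i - f0 i) * X.mulVec (fun j => βinit j - b0 j) i)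
        + ∑ i, (X.mulVec b0 i - f0 i) ^ 2 := by
    rw [Finset.mul_sum, ← Finset.sum_add_distrib, ← Finset.sum_add_distrib]
    exact Finset.sum_congr rfl fun i _ => by rw [hwdef i]; ring
  -- ℓ1 splitting
  have hsplit : lamInit * (∑ j, |b0 j|) - lamInit * (∑ j, |βinit j|)
      ≤ lamInit * A - lamInit * B := by
    have e1 : ∑ j, |b0 j| = ∑ j ∈ S0, |b0 j| := by
      rw [← Finset.sum_add_sum_compl S0 (fun j => |b0 j|),
        Finset.sum_eq_zero (s := S0ᶜ) (fun j hj => by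
          rw [hb0supp j (Finset.mem_compl.mp hj), abs_zero]), add_zero]
    have e2 : ∑ j, |βinit j| = ∑ j ∈ S0, |βinit j| + B := by
      rw [← Finset.sum_add_sum_compl S0 (fun j => |βinit j|), hB]
      congr 1
      exact Finset.sum_congr rfl fun j hj => by
        rw [hb0supp j (Finset.mem_compl.mp hj), sub_zero]
    have e3 : ∑ j ∈ S0, |b0 j| - ∑ j ∈ S0, |βinit j| ≤ A := by
      rw [hA, ← Finset.sum_sub_distrib]
      refine Finset.sum_le_sum fun j _ => ?_
      calc |b0 j| - |βinit j| ≤ |b0 j - βinit j| := abs_sub_abs_le_abs_sub _ _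
        _ = |βinit j - b0 j| := abs_sub_comm _ _
    rw [e1, e2]
    nlinarith [mul_le_mul_of_nonneg_left e3 hlamInit.le]
  -- master inequality : T + lam*B ≤ lam*A + R
  have hmaster : T + lamInit * B ≤ lamInit * A + R := by
    have h1 : 2 * (((∑ i, (X.mulVec (fun j => βinit j - b0 j) i) ^ 2)
          + ∑ i, (X.mulVec b0 i - f0 i) * X.mulVec (fun j => βinit j - b0 j) i) / n)
        ≤ lamInit * A - lamInit * B := by
      rw [← hC]; exact le_trans hlim hsplit
    have h2 : (0:ℝ) ≤ ((∑ i, (X.mulVec (fun j => βinit j - b0 j) i) ^ 2)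
          + 2 * (∑ i, (X.mulVec b0 i - f0 i) * X.mulVec (fun j => βinit j - b0 j) i)
          + ∑ i, (X.mulVec b0 i - f0 i) ^ 2) / n := by
      rw [← hVexp]; positivity
    rw [hT, hR]
    have e1 : (((∑ i, (X.mulVec (fun j => βinit j - b0 j) i) ^ 2)
          + ∑ i, (X.mulVec b0 i - f0 i) * X.mulVec (fun j => βinit j - b0 j) i) / (n:ℝ))
        = (∑ i, (X.mulVec (fun j => βinit j - b0 j) i) ^ 2) / (n:ℝ)
          + (∑ i, (X.mulVec b0 i - f0 i) * X.mulVec (fun j => βinit j - b0 j) i) / (n:ℝ) := by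
      ring
    have e2 : ((∑ i, (X.mulVec (fun j => βinit j - b0 j) i) ^ 2)
          + 2 * (∑ i, (X.mulVec b0 i - f0 i) * X.mulVec (fun j => βinit j - b0 j) i)
          + ∑ i, (X.mulVec b0 i - f0 i) ^ 2) / (n:ℝ)
        = (∑ i, (X.mulVec (fun j => βinit j - b0 j) i) ^ 2) / (n:ℝ)
          + 2 * ((∑ i, (X.mulVec b0 i - f0 i) * X.mulVec (fun j => βinit j - b0 j) i) / (n:ℝ))
          + (∑ i, (X.mulVec b0 i - f0 i) ^ 2) / (n:ℝ) := by
      ring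
    rw [e1] at h1
    rw [e2] at h2
    have hW0 : (0:ℝ) ≤ (∑ i, (X.mulVec (fun j => βinit j - b0 j) i) ^ 2) / (n:ℝ) := by
      positivity
    linarith
  have hsumAB : A + B = ∑ j, |βinit j - b0 j| := by
    rw [hA, hB]; exact Finset.sum_add_sum_compl S0 _
  constructor
  · -- ℓ1 bound
    rw [← hsumAB]
    by_cases hc : B ≤ 2 * σ * u
    · -- cone case : restricted eigenvalue applies
      have hre : φ * u ≤ Real.sqrt T := by
        have h := hRE (fun j => βinit j - b0 j) (by rw [← hB, ← hu]; exact hc)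
        rw [← hu, ← hT] at h
        exact h
      set t := Real.sqrt T with ht
      have ht0 : 0 ≤ t := by rw [ht]; positivity
      have ht2 : t ^ 2 = T := by rw [ht]; exact Real.sq_sqrt hT0
      have hlA : lamInit * A ≤ lamInit * (σ * u) :=
        mul_le_mul_of_nonneg_left hACS hlamInit.le
      have h1 : T ≤ lamInit * σ * u + R := by
        have := mul_le_mul_of_nonneg_left hACS hlamInit.le
        linarith [hmaster, mul_nonneg hlamInit.le hB0]
      have huφ : u * φ ≤ t := by linarith
      have h2a : lamInit * σ * (u * φ * φ) ≤ lamInit * σ * (t * φ) := by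
        apply mul_le_mul_of_nonneg_left _ (by positivity)
        exact mul_le_mul_of_nonneg_right huφ hφ.le
      have h2 : (t * φ) ^ 2 ≤ (lamInit * σ) * (t * φ) + (ρ * φ) ^ 2 := by
        have e1 : t ^ 2 * φ ^ 2 = T * φ ^ 2 := by rw [ht2]
        have e2 : ρ ^ 2 * φ ^ 2 = R * φ ^ 2 := by rw [hρ2]
        linarith [mul_le_mul_of_nonneg_right h1 (sq_nonneg φ), h2a, e1, e2]
      have h3 : t * φ ≤ lamInit * σ + ρ * φ :=
        quad_root_bound (by positivity) (by positivity) (by positivity) h2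
      have hAB : lamInit * (A + B) ≤ 2 * (lamInit * σ * u) + R := by
        linarith [hmaster, hT0, hlA]
      rw [show ((S0.card : ℝ)) = σ ^ 2 by rw [hσ2]]
      apply le_of_mul_le_mul_right _ (show (0:ℝ) < lamInit * φ ^ 2 by positivity)
      have erhs : (3 * R / lamInit + 3 * lamInit * σ ^ 2 / φ ^ 2) * (lamInit * φ ^ 2)
          = 3 * R * φ ^ 2 + 3 * lamInit ^ 2 * σ ^ 2 := by
        field_simp
      rw [erhs]
      have k2 : lamInit * σ * (t * φ) ≤ lamInit * σ * (lamInit * σ + ρ * φ) :=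
        mul_le_mul_of_nonneg_left h3 (by positivity)
      have m1 := mul_le_mul_of_nonneg_right hAB (sq_nonneg φ)
      have m2 := le_trans h2a k2
      have m4 : ρ ^ 2 * φ ^ 2 = R * φ ^ 2 := by rw [hρ2]
      have m5 : (0:ℝ) ≤ R * φ ^ 2 := by positivity
      linarith [m1, m2, m4, m5, sq_nonneg (lamInit * σ - ρ * φ)]
    · push_neg at hc
      have hlsu : lamInit * (σ * u) ≤ lamInit * B / 2 := by
        linarith [mul_le_mul_of_nonneg_left hc.le hlamInit.le]
      have hlA : lamInit * A ≤ lamInit * (σ * u) :=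
        mul_le_mul_of_nonneg_left hACS hlamInit.le
      have hBle : lamInit * B ≤ 2 * R := by linarith [hmaster, hT0]
      have hAle : lamInit * A ≤ R := by linarith
      have hg1 : A + B ≤ 3 * R / lamInit := by
        rw [le_div_iff₀ hlamInit]; nlinarith [hAle, hBle]
      have hg2 : (0:ℝ) ≤ 3 * lamInit * (S0.card : ℝ) / φ ^ 2 := by positivity
      linarith
  · -- ℓ2 bound
    obtain ⟨M, hMs, hMc, hMtop⟩ := exists_top_subset S0ᶜ (fun j => |βinit j - b0 j|)
      (min S0.card S0ᶜ.card) (min_le_right _ _)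
    set N := S0 ∪ M with hN
    have hdisj : Disjoint S0 M := by
      rw [Finset.disjoint_left]
      intro a ha haM
      exact (Finset.mem_compl.mp (hMs haM)) ha
    have hS0N : S0 ⊆ N := by rw [hN]; exact Finset.subset_union_left
    have hNcard : N.card = S0.card + min S0.card S0ᶜ.card := by
      rw [hN, Finset.card_union_of_disjoint hdisj, hMc]
    have hNle : N.card ≤ 2 * S0.card := by omega
    set U := Real.sqrt (∑ j ∈ N, (βinit j - b0 j) ^ 2) with hU
    have hU0 : 0 ≤ U := by rw [hU]; positivity
    have huU : u ≤ U := by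
      rw [hu, hU]
      exact Real.sqrt_le_sqrt (Finset.sum_le_sum_of_subset_of_nonneg hS0N
        (fun j _ _ => sq_nonneg _))
    have hNc_sub : Nᶜ ⊆ S0ᶜ := Finset.compl_subset_compl.mpr hS0N
    have hNc_l1 : ∑ j ∈ Nᶜ, |βinit j - b0 j| ≤ B := by
      rw [hB]
      exact Finset.sum_le_sum_of_subset_of_nonneg hNc_sub (fun j _ _ => abs_nonneg _)
    have hNc_sq : ∑ j ∈ Nᶜ, (βinit j - b0 j) ^ 2 ≤ B ^ 2 / S0.card := by
      by_cases hmin : min S0.card S0ᶜ.card = S0.card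
      · have hbound : ∀ j ∈ Nᶜ, |βinit j - b0 j| * (S0.card : ℝ) ≤ B := by
          intro j hj
          have hjN : j ∉ N := Finset.mem_compl.mp hj
          have hjc : j ∈ S0ᶜ := hNc_sub hj
          have hjM : j ∉ M := fun h => hjN (by rw [hN]; exact Finset.mem_union_right _ h)
          calc |βinit j - b0 j| * (S0.card : ℝ)
              = ∑ _k ∈ M, |βinit j - b0 j| := by
                rw [Finset.sum_const, hMc, hmin, nsmul_eq_mul]; ring
            _ ≤ ∑ k ∈ M, |βinit k - b0 k| :=
                Finset.sum_le_sum (fun k hk => hMtop j hjc hjM k hk)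
            _ ≤ B := by
                rw [hB]
                exact Finset.sum_le_sum_of_subset_of_nonneg hMs (fun _ _ _ => abs_nonneg _)
        calc ∑ j ∈ Nᶜ, (βinit j - b0 j) ^ 2
            ≤ ∑ j ∈ Nᶜ, (B / S0.card) * |βinit j - b0 j| := by
              refine Finset.sum_le_sum fun j hj => ?_
              have h1 := hbound j hj
              have h2 : |βinit j - b0 j| ≤ B / S0.card := by
                rw [le_div_iff₀ hcard]; linarith
              calc (βinit j - b0 j) ^ 2 = |βinit j - b0 j| * |βinit j - b0 j| := by
                    rw [sq, abs_mul_abs_self]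
                _ ≤ (B / S0.card) * |βinit j - b0 j| :=
                    mul_le_mul_of_nonneg_right h2 (abs_nonneg _)
          _ = (B / S0.card) * ∑ j ∈ Nᶜ, |βinit j - b0 j| := by rw [Finset.mul_sum]
          _ ≤ (B / S0.card) * B :=
              mul_le_mul_of_nonneg_left hNc_l1 (by positivity)
          _ = B ^ 2 / S0.card := by ring
      · have hm2 : min S0.card S0ᶜ.card = S0ᶜ.card := by omega
        have hMeq : M = S0ᶜ := Finset.eq_of_subset_of_card_le hMs (by rw [hMc, hm2])
        have hNuniv : N = Finset.univ := by rw [hN, hMeq, Finset.union_compl]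
        rw [hNuniv, Finset.compl_univ, Finset.sum_empty]
        exact div_nonneg (sq_nonneg _) (Nat.cast_nonneg _)
    have hsqrtNc : Real.sqrt (∑ j ∈ Nᶜ, (βinit j - b0 j) ^ 2) ≤ B / σ := by
      have h1 := Real.sqrt_le_sqrt hNc_sq
      have h2 : Real.sqrt (B ^ 2 / (S0.card : ℝ)) = B / σ := by
        rw [Real.sqrt_div (sq_nonneg B), Real.sqrt_sq hB0, hσ]
      rw [h2] at h1
      exact h1
    have hl2split : Real.sqrt (∑ j, (βinit j - b0 j) ^ 2) ≤ U + B / σ := by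
      rw [show (∑ j, (βinit j - b0 j) ^ 2)
          = (∑ j ∈ N, (βinit j - b0 j) ^ 2) + ∑ j ∈ Nᶜ, (βinit j - b0 j) ^ 2 from
        (Finset.sum_add_sum_compl N _).symm]
      calc Real.sqrt ((∑ j ∈ N, (βinit j - b0 j) ^ 2) + ∑ j ∈ Nᶜ, (βinit j - b0 j) ^ 2)
          ≤ Real.sqrt (∑ j ∈ N, (βinit j - b0 j) ^ 2)
            + Real.sqrt (∑ j ∈ Nᶜ, (βinit j - b0 j) ^ 2) :=
            sqrt_add_le' (by positivity) (by positivity)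
        _ ≤ U + B / σ := by rw [← hU]; linarith [hsqrtNc]
    have hlA : lamInit * A ≤ lamInit * (σ * u) :=
      mul_le_mul_of_nonneg_left hACS hlamInit.le
    by_cases hc : B ≤ 2 * σ * U
    · -- cone case for N
      have hσN : σ ≤ Real.sqrt ((N.card : ℝ)) := by
        rw [hσ]
        exact Real.sqrt_le_sqrt (by exact_mod_cast Finset.card_le_card hS0N)
      have hcone : ∑ j ∈ Nᶜ, |βinit j - b0 j|
          ≤ 2 * Real.sqrt ((N.card : ℝ)) * Real.sqrt (∑ j ∈ N, (βinit j - b0 j) ^ 2) := by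
        rw [← hU]
        have : 2 * σ * U ≤ 2 * Real.sqrt ((N.card : ℝ)) * U := by
          have := mul_le_mul_of_nonneg_right hσN hU0
          linarith
        linarith [hNc_l1, hc]
      have horder : ∀ j ∉ N, ∀ k ∈ N \ S0, |βinit j - b0 j| ≤ |βinit k - b0 k| := by
        intro j hj k hk
        obtain ⟨hkN, hkS0⟩ := Finset.mem_sdiff.mp hk
        have hkM : k ∈ M := by
          rw [hN] at hkN
          rcases Finset.mem_union.mp hkN with h | h
          · exact absurd h hkS0
          · exact h
        have hjc : j ∈ S0ᶜ := Finset.mem_compl.mpr fun h => hj (hS0N h)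
        have hjM : j ∉ M := fun h => hj (by rw [hN]; exact Finset.mem_union_right _ h)
        exact hMtop j hjc hjM k hkM
      have hre : φ' * U ≤ Real.sqrt T := by
        have h := hRE' N hS0N hNle (fun j => βinit j - b0 j) hcone horder
        rw [← hU, ← hT] at h
        exact h
      set t := Real.sqrt T with ht
      have ht0 : 0 ≤ t := by rw [ht]; positivity
      have ht2 : t ^ 2 = T := by rw [ht]; exact Real.sq_sqrt hT0
      have h1 : T ≤ lamInit * σ * U + R := by
        have huU' : lamInit * (σ * u) ≤ lamInit * (σ * U) :=
          mul_le_mul_of_nonneg_left (mul_le_mul_of_nonneg_left huU hσ0.le) hlamInit.le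
        linarith [hmaster, mul_nonneg hlamInit.le hB0, hlA]
      have hUφ : U * φ' ≤ t := by linarith
      have h2a : lamInit * σ * (U * φ' * φ') ≤ lamInit * σ * (t * φ') := by
        apply mul_le_mul_of_nonneg_left _ (by positivity)
        exact mul_le_mul_of_nonneg_right hUφ hφ'.le
      have h2 : (t * φ') ^ 2 ≤ (lamInit * σ) * (t * φ') + (ρ * φ') ^ 2 := by
        have e1 : t ^ 2 * φ' ^ 2 = T * φ' ^ 2 := by rw [ht2]
        have e2 : ρ ^ 2 * φ' ^ 2 = R * φ' ^ 2 := by rw [hρ2]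
        linarith [mul_le_mul_of_nonneg_right h1 (sq_nonneg φ'), h2a, e1, e2]
      have h3 : t * φ' ≤ lamInit * σ + ρ * φ' :=
        quad_root_bound (by positivity) (by positivity) (by positivity) h2
      have hBbd : lamInit * B ≤ lamInit * σ * U + R := by
        have huU' : lamInit * (σ * u) ≤ lamInit * (σ * U) :=
          mul_le_mul_of_nonneg_left (mul_le_mul_of_nonneg_left huU hσ0.le) hlamInit.le
        linarith [hmaster, hT0, hlA]
      -- conclude
      refine le_trans hl2split ?_
      apply le_of_mul_le_mul_right _
        (show (0:ℝ) < lamInit * σ * φ' ^ 2 by positivity)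
      have erhs : (6 * R / (lamInit * σ) + 12 * lamInit * σ / φ' ^ 2)
            * (lamInit * σ * φ' ^ 2)
          = 6 * R * φ' ^ 2 + 12 * lamInit ^ 2 * σ ^ 2 := by
        field_simp
      have elhs : (U + B / σ) * (lamInit * σ * φ' ^ 2)
          = lamInit * σ * (U * φ' * φ') + lamInit * B * φ' ^ 2 := by
        field_simp
      rw [erhs, elhs]
      have m2 : lamInit * σ * (t * φ') ≤ lamInit * σ * (lamInit * σ + ρ * φ') :=
        mul_le_mul_of_nonneg_left h3 (by positivity)
      have m3 := mul_le_mul_of_nonneg_right hBbd (sq_nonneg φ')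
      have m4 : ρ ^ 2 * φ' ^ 2 = R * φ' ^ 2 := by rw [hρ2]
      have m5 : (0:ℝ) ≤ R * φ' ^ 2 := by positivity
      -- lamInit*σ*(U*φ'*φ') ≤ lamInit*σ*(t*φ') ≤ λσ(λσ+ρφ')
      -- lamInit*B*φ'^2 ≤ (λσU + R)*φ'^2 = λσ(Uφ'φ') + Rφ'^2 ≤ λσ(λσ+ρφ') + Rφ'^2
      have m6 : (0:ℝ) ≤ lamInit ^ 2 * σ ^ 2 := by positivity
      linarith [h2a, m2, m3, m4, m5, m6, sq_nonneg (lamInit * σ - ρ * φ')]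
    · push_neg at hc
      have hlsU : lamInit * (σ * U) ≤ lamInit * B / 2 := by
        linarith [mul_le_mul_of_nonneg_left hc.le hlamInit.le]
      have hluU : lamInit * (σ * u) ≤ lamInit * (σ * U) :=
        mul_le_mul_of_nonneg_left (mul_le_mul_of_nonneg_left huU hσ0.le) hlamInit.le
      have hBle : lamInit * B ≤ 2 * R := by linarith [hmaster, hT0, hlA]
      have hUle : lamInit * (σ * U) ≤ R := by linarith
      refine le_trans hl2split ?_
      apply le_of_mul_le_mul_right _
        (show (0:ℝ) < lamInit * σ * φ' ^ 2 by positivity)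
      have erhs : (6 * R / (lamInit * σ) + 12 * lamInit * σ / φ' ^ 2)
            * (lamInit * σ * φ' ^ 2)
          = 6 * R * φ' ^ 2 + 12 * lamInit ^ 2 * σ ^ 2 := by
        field_simp
      have elhs : (U + B / σ) * (lamInit * σ * φ' ^ 2)
          = lamInit * σ * U * φ' ^ 2 + lamInit * B * φ' ^ 2 := by
        field_simp
      rw [erhs, elhs]
      have m1 := mul_le_mul_of_nonneg_right hUle (sq_nonneg φ')
      have m2 := mul_le_mul_of_nonneg_right hBle (sq_nonneg φ')
      have m5 : (0:ℝ) ≤ R * φ' ^ 2 := by positivity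
      have m6 : (0:ℝ) ≤ lamInit ^ 2 * σ ^ 2 := by positivity
      linarith [m1, m2, m5, m6]
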